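/- For the path P_n on n vertices and every 0 ≤ k ≤ n, the number of k-subsets of V(P_n) that are not zero forcing sets equals C(n−k−1, k). Equivalently, the number of zero forcing sets of size k in P_n is C(n,k) − C(n−k−1, k). -/

import Mathlib

open SimpleGraph

/-- The zero forcing closure: `ZFClosure G S v` means vertex `v` eventually becomes blue
when starting from the blue set `S` and repeatedly applying the color-change rule:
a blue vertex with exactly one white neighbor forces that neighbor to become blue. -/
inductive ZFClosure {V : Type*} (G : SimpleGraph V) (S : Set V) : V → Prop
  | init {v : V} : v ∈ S → ZFClosure G S v
  | force {u w : V} : ZFClosure G S u → G.Adj u w →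
      (∀ x, G.Adj u x → x ≠ w → ZFClosure G S x) → ZFClosure G S w

/-- `S` is a zero forcing set of `G` if its closure is all of `V`. -/
def IsZeroForcing {V : Type*} (G : SimpleGraph V) (S : Set V) : Prop :=
  ∀ v, ZFClosure G S v

/-- `z(G;k)`: the number of zero forcing sets of size `k`. -/
noncomputable def zfCount {V : Type*} (G : SimpleGraph V) [Fintype V] (k : ℕ) : ℕ :=
  Nat.card {S : Finset V // S.card = k ∧ IsZeroForcing G ↑S}

/-- `z'(G;k)`: the number of non-forcing `k`-subsets. -/
noncomputable def nfCount {V : Type*} (G : SimpleGraph V) [Fintype V] (k : ℕ) : ℕ :=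
  Nat.card {S : Finset V // S.card = k ∧ ¬ IsZeroForcing G ↑S}

/-- A fort: every vertex outside `F` has `0` or at least `2` neighbors in `F`. -/
def IsFort {V : Type*} (G : SimpleGraph V) (F : Set V) : Prop :=
  ∀ v ∉ F, (∀ w ∈ F, ¬ G.Adj v w) ∨
    ∃ w₁ ∈ F, ∃ w₂ ∈ F, w₁ ≠ w₂ ∧ G.Adj v w₁ ∧ G.Adj v w₂

/-- True twins: adjacent with the same neighbors outside the pair. -/
def TrueTwins {V : Type*} (G : SimpleGraph V) (u v : V) : Prop :=
  G.Adj u v ∧ ∀ w, w ≠ u → w ≠ v → (G.Adj u w ↔ G.Adj v w)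

/-- False twins: distinct, nonadjacent, with the same open neighborhoods. -/
def FalseTwins {V : Type*} (G : SimpleGraph V) (u v : V) : Prop :=
  u ≠ v ∧ ¬ G.Adj u v ∧ ∀ w, G.Adj u w ↔ G.Adj v w

/-- A twin pair: true twins or false twins. -/
def TwinPair {V : Type*} (G : SimpleGraph V) (u v : V) : Prop :=
  TrueTwins G u v ∨ FalseTwins G u v

/-- `G` is path-extremal: the path on the same number of vertices has
coefficientwise at least as many zero forcing sets of every size. -/
noncomputable def PathExtremal {V : Type*} (G : SimpleGraph V) [Fintype V] : Prop :=
  ∀ k : ℕ, zfCount G k ≤ zfCount (SimpleGraph.pathGraph (Fintype.card V)) k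

/-! ### Auxiliary material for the proof -/

section Aux

/-- The "bad" (non-forcing) condition for a subset of the path graph: it contains neither
endpoint nor two consecutive vertices. -/
def PBad (n : ℕ) (S : Finset (Fin n)) : Prop :=
  (∀ i ∈ S, (i : ℕ) ≠ 0) ∧ (∀ i ∈ S, (i : ℕ) + 1 ≠ n) ∧
    ∀ i ∈ S, ∀ j ∈ S, (i : ℕ) + 1 ≠ (j : ℕ)

instance (n : ℕ) : DecidablePred (PBad n) := fun S => by unfold PBad; infer_instance

lemma pbad_stalled {n : ℕ} {S : Finset (Fin n)} (hb : PBad n S) {v : Fin n}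
    (hv : ZFClosure (pathGraph n) ↑S v) : v ∈ S := by
  induction hv with
  | init h => exact h
  | @force u w hu hadj hall ihu ihall =>
    exfalso
    obtain ⟨h0, hlast, hcons⟩ := hb
    have hu0 : (u : ℕ) ≠ 0 := h0 u ihu
    have hul : (u : ℕ) + 1 ≠ n := hlast u ihu
    rw [pathGraph_adj] at hadj
    rcases hadj with h | h
    · -- w = u + 1, other neighbor is u - 1
      have hx : (u : ℕ) - 1 < n := by omega
      set x : Fin n := ⟨(u : ℕ) - 1, hx⟩ with hxdef
      have hax : (pathGraph n).Adj u x := by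
        rw [pathGraph_adj]; right; simp [hxdef]; omega
      have hxw : x ≠ w := by
        intro he; apply_fun (Fin.val) at he; simp [hxdef] at he; omega
      have hxS : x ∈ S := ihall x hax hxw
      exact hcons x hxS u ihu (by simp [hxdef]; omega)
    · -- w = u - 1, other neighbor is u + 1
      have hx : (u : ℕ) + 1 < n := by omega
      set x : Fin n := ⟨(u : ℕ) + 1, hx⟩ with hxdef
      have hax : (pathGraph n).Adj u x := by rw [pathGraph_adj]; left; simp [hxdef]
      have hxw : x ≠ w := by
        intro he; apply_fun (Fin.val) at he; simp [hxdef] at he; omega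
      have hxS : x ∈ S := ihall x hax hxw
      exact hcons u ihu x hxS (by simp [hxdef])

lemma pbad_not_forcing {n : ℕ} (hn : 1 ≤ n) {S : Finset (Fin n)} (hb : PBad n S) :
    ¬ IsZeroForcing (pathGraph n) ↑S := by
  intro hf
  have h := pbad_stalled hb (hf ⟨0, hn⟩)
  exact hb.1 _ h rfl

lemma spread_ge {n : ℕ} {S : Set (Fin n)} {a : ℕ} (ha : a + 1 < n)
    (h0 : ZFClosure (pathGraph n) S ⟨a, by omega⟩)
    (h1 : ZFClosure (pathGraph n) S ⟨a + 1, ha⟩) :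
    ∀ j, ∀ v : Fin n, (v : ℕ) = a + j → ZFClosure (pathGraph n) S v := by
  intro j
  induction j using Nat.strong_induction_on with
  | _ j IH =>
    intro v hv
    match j, IH with
    | 0, _ => exact (Fin.ext hv : v = ⟨a, by omega⟩) ▸ h0
    | 1, _ => exact (Fin.ext hv : v = ⟨a + 1, ha⟩) ▸ h1
    | (j + 2), IH =>
      have hvn : a + (j + 2) < n := hv ▸ v.isLt
      have hu : a + (j + 1) < n := by omega
      refine ZFClosure.force (u := ⟨a + (j + 1), hu⟩)
        (IH (j + 1) (by omega) _ rfl) ?_ ?_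
      · rw [pathGraph_adj]; left; simp; omega
      · intro x hx hne
        rw [pathGraph_adj] at hx
        rcases hx with h | h
        · exact absurd (Fin.ext (by simp only [Fin.val_mk] at h ⊢ <;> omega) : x = v) hne
        · exact IH j (by omega) x (by simp only [Fin.val_mk] at h; omega)

lemma spread_le {n : ℕ} {S : Set (Fin n)} {a : ℕ} (ha : a + 1 < n)
    (h0 : ZFClosure (pathGraph n) S ⟨a, by omega⟩)
    (h1 : ZFClosure (pathGraph n) S ⟨a + 1, ha⟩) :
    ∀ j, ∀ v : Fin n, (v : ℕ) + j = a → ZFClosure (pathGraph n) S v := by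
  intro j
  induction j using Nat.strong_induction_on with
  | _ j IH =>
    intro v hv
    match j, IH with
    | 0, _ => exact (Fin.ext hv : v = ⟨a, by omega⟩) ▸ h0
    | (j + 1), IH =>
      have hu : (v : ℕ) + 1 < n := by omega
      refine ZFClosure.force (u := ⟨(v : ℕ) + 1, hu⟩)
        (IH j (by omega) _ (by simp; omega)) ?_ ?_
      · rw [pathGraph_adj]; right; simp
      · intro x hx hne
        rw [pathGraph_adj] at hx
        rcases hx with h | h
        · -- x = v + 2
          rcases Nat.eq_zero_or_pos j with hj | hj
          · subst hj
            exact (Fin.ext (by simp only [Fin.val_mk] at h ⊢ <;> omega) : x = ⟨a + 1, ha⟩) ▸ h1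
          · exact IH (j - 1) (by omega) x (by simp only [Fin.val_mk] at h; omega)
        · exact absurd (Fin.ext (by simp only [Fin.val_mk] at h ⊢ <;> omega) : x = v) hne

lemma all_of_pair {n : ℕ} {S : Set (Fin n)} {a : ℕ} (ha : a + 1 < n)
    (h0 : ZFClosure (pathGraph n) S ⟨a, by omega⟩)
    (h1 : ZFClosure (pathGraph n) S ⟨a + 1, ha⟩) :
    ∀ v : Fin n, ZFClosure (pathGraph n) S v := by
  intro v
  rcases le_or_gt (v : ℕ) a with h | h
  · exact spread_le ha h0 h1 (a - (v : ℕ)) v (by omega)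
  · exact spread_ge ha h0 h1 ((v : ℕ) - a) v (by omega)

lemma forcing_of_good {n : ℕ} {S : Set (Fin n)} (hn : 1 ≤ n)
    (h : (∃ i ∈ S, (i : ℕ) = 0) ∨ (∃ i ∈ S, (i : ℕ) + 1 = n) ∨
      ∃ i ∈ S, ∃ j ∈ S, (i : ℕ) + 1 = (j : ℕ)) :
    IsZeroForcing (pathGraph n) S := by
  rcases Nat.lt_or_ge n 2 with h2 | h2
  · -- n = 1
    have hn1 : n = 1 := by omega
    rcases h with ⟨i, hi, _⟩ | ⟨i, hi, _⟩ | ⟨i, hi, _⟩ <;>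
    · intro v
      have : v = i := by subst hn1; exact Subsingleton.elim v i
      exact this ▸ ZFClosure.init hi
  · rcases h with ⟨i, hi, hi0⟩ | ⟨i, hi, hil⟩ | ⟨i, hi, j, hj, hij⟩
    · -- 0 ∈ S
      have h0 : ZFClosure (pathGraph n) S ⟨0, by omega⟩ := by
        have : i = ⟨0, by omega⟩ := Fin.ext hi0
        exact this ▸ ZFClosure.init hi
      have h1 : ZFClosure (pathGraph n) S ⟨1, by omega⟩ := by
        refine ZFClosure.force h0 ?_ ?_
        · rw [pathGraph_adj]; left; simp
        · intro x hx hne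
          rw [pathGraph_adj] at hx
          exfalso
          rcases hx with hh | hh
          · exact hne (Fin.ext (by simp only [Fin.val_mk] at hh ⊢; omega))
          · simp only [Fin.val_mk] at hh; omega
      exact fun v => all_of_pair (n := n) (S := S) (a := 0) (by omega) h0 h1 v
    · -- n-1 ∈ S
      have hlast : ZFClosure (pathGraph n) S ⟨n - 1, by omega⟩ := by
        have : i = ⟨n - 1, by omega⟩ := Fin.ext (by simp only [Fin.val_mk]; omega)
        exact this ▸ ZFClosure.init hi
      have hprev : ZFClosure (pathGraph n) S ⟨n - 2, by omega⟩ := by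
        refine ZFClosure.force hlast ?_ ?_
        · rw [pathGraph_adj]; right; simp only [Fin.val_mk]; omega
        · intro x hx hne
          rw [pathGraph_adj] at hx
          exfalso
          rcases hx with hh | hh
          · simp only [Fin.val_mk] at hh; omega
          · exact hne (Fin.ext (by simp only [Fin.val_mk] at hh ⊢; omega))
      have h1 : ZFClosure (pathGraph n) S ⟨(n - 2) + 1, by omega⟩ := by
        have : (⟨n - 1, by omega⟩ : Fin n) = ⟨(n - 2) + 1, by omega⟩ :=
          Fin.ext (by simp only [Fin.val_mk]; omega)
        exact this ▸ hlast
      exact fun v => all_of_pair (n := n) (S := S) (a := n - 2) (by omega) hprev h1 v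
    · -- adjacent pair
      have h0 : ZFClosure (pathGraph n) S ⟨(i : ℕ), i.isLt⟩ := by
        have : i = ⟨(i : ℕ), i.isLt⟩ := Fin.ext rfl
        exact this ▸ ZFClosure.init hi
      have h1 : ZFClosure (pathGraph n) S ⟨(i : ℕ) + 1, by omega⟩ := by
        have : j = ⟨(i : ℕ) + 1, by omega⟩ := Fin.ext (by simp only [Fin.val_mk]; omega)
        exact this ▸ ZFClosure.init hj
      exact fun v => all_of_pair (n := n) (S := S) (a := (i : ℕ)) (by omega) h0 h1 v

lemma not_forcing_iff_pbad {n : ℕ} (hn : 1 ≤ n) (S : Finset (Fin n)) :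
    ¬ IsZeroForcing (pathGraph n) ↑S ↔ PBad n S := by
  constructor
  · intro h
    by_contra hb
    apply h
    apply forcing_of_good hn
    unfold PBad at hb
    push_neg at hb
    by_cases h0 : ∀ i ∈ S, (i : ℕ) ≠ 0
    · by_cases hl : ∀ i ∈ S, (i : ℕ) + 1 ≠ n
      · obtain ⟨i, hi, j, hj, hij⟩ := hb h0 hl
        right; right
        exact ⟨i, Finset.mem_coe.mpr hi, j, Finset.mem_coe.mpr hj,
          by simpa using hij⟩
      · push_neg at hl
        obtain ⟨i, hi, hil⟩ := hl
        right; left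
        exact ⟨i, Finset.mem_coe.mpr hi, by simpa using hil⟩
    · push_neg at h0
      obtain ⟨i, hi, hi0⟩ := h0
      left
      exact ⟨i, Finset.mem_coe.mpr hi, by simpa using hi0⟩
  · exact pbad_not_forcing hn

/-- Subsets of `ℕ` with no two consecutive elements. -/
def NoConsec (T : Finset ℕ) : Prop := ∀ i ∈ T, i + 1 ∉ T

instance : DecidablePred NoConsec := fun T => by unfold NoConsec; infer_instance

lemma count_noConsec : ∀ m k : ℕ,
    (((Finset.range m).powersetCard k).filter NoConsec).card = (m + 1 - k).choose k := by
  intro m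
  induction m using Nat.strong_induction_on with
  | _ m IH =>
    intro k
    match m, k with
    | m, 0 =>
      rw [Finset.powersetCard_zero]
      rw [Finset.filter_singleton]
      simp [NoConsec]
    | 0, (k + 1) =>
      rw [Finset.range_zero, Finset.powersetCard_eq_empty.mpr (by simp)]
      simp [Nat.choose_eq_zero_of_lt]
    | 1, (k + 1) =>
      rcases Nat.eq_zero_or_pos k with rfl | hk
      · decide
      · rw [Finset.powersetCard_eq_empty.mpr (by simp; omega)]
        rw [Finset.filter_empty, Finset.card_empty,
          Nat.choose_eq_zero_of_lt (by omega : 1 + 1 - (k + 1) < k + 1)]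
    | (m + 2), (k + 1) =>
      classical
      set F := ((Finset.range (m + 2)).powersetCard (k + 1)).filter NoConsec with hF
      have hsplit : (F.filter (fun T => (m + 1) ∈ T)).card
          + (F.filter (fun T => ¬ (m + 1) ∈ T)).card = F.card :=
        Finset.card_filter_add_card_filter_not _
      -- the part not containing m+1
      have hnot : F.filter (fun T => ¬ (m + 1) ∈ T)
          = ((Finset.range (m + 1)).powersetCard (k + 1)).filter NoConsec := by
        ext T
        simp only [hF, Finset.mem_filter, Finset.mem_powersetCard]
        constructor
        · rintro ⟨⟨⟨hsub, hcard⟩, hnc⟩, hmem⟩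
          refine ⟨⟨fun x hx => ?_, hcard⟩, hnc⟩
          have := hsub hx
          simp only [Finset.mem_range] at this ⊢
          rcases Nat.lt_or_ge x (m + 1) with h | h
          · exact h
          · exfalso; apply hmem; have : x = m + 1 := by omega
            exact this ▸ hx
        · rintro ⟨⟨hsub, hcard⟩, hnc⟩
          refine ⟨⟨⟨fun x hx => ?_, hcard⟩, hnc⟩, fun hm => ?_⟩
          · have := hsub hx; simp only [Finset.mem_range] at this ⊢; omega
          · have := hsub hm; simp at this
      -- the part containing m+1, biject with level m
      have hmemcard : (F.filter (fun T => (m + 1) ∈ T)).card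
          = (((Finset.range m).powersetCard k).filter NoConsec).card := by
        apply Finset.card_nbij' (fun T => T.erase (m + 1)) (fun T => insert (m + 1) T)
        · intro T hT
          simp only [Finset.mem_coe, hF, Finset.mem_filter, Finset.mem_powersetCard] at hT ⊢
          obtain ⟨⟨⟨hsub, hcard⟩, hnc⟩, hmem⟩ := hT
          have hmnotin : m ∉ T := fun hm => (hnc m hm) hmem
          refine ⟨⟨fun x hx => ?_, ?_⟩, ?_⟩
          · rw [Finset.mem_erase] at hx
            have := hsub hx.2
            simp only [Finset.mem_range] at this ⊢
            rcases Nat.lt_or_ge x m with h | h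
            · exact h
            · exfalso
              have : x = m ∨ x = m + 1 := by omega
              rcases this with rfl | rfl
              · exact hmnotin hx.2
              · exact hx.1 rfl
          · rw [Finset.card_erase_of_mem hmem, hcard]; omega
          · intro i hi; rw [Finset.mem_erase] at hi
            intro hi1; rw [Finset.mem_erase] at hi1
            exact hnc i hi.2 hi1.2
        · intro T hT
          simp only [Finset.mem_coe, hF, Finset.mem_filter, Finset.mem_powersetCard] at hT ⊢
          obtain ⟨⟨hsub, hcard⟩, hnc⟩ := hT
          have hnotin : m + 1 ∉ T := fun h => by have := hsub h; simp at this
          refine ⟨⟨⟨fun x hx => ?_, ?_⟩, ?_⟩, Finset.mem_insert_self _ _⟩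
          · rw [Finset.mem_insert] at hx
            rcases hx with rfl | hx
            · simp
            · have := hsub hx; simp only [Finset.mem_range] at this ⊢; omega
          · rw [Finset.card_insert_of_notMem hnotin, hcard]
          · intro i hi
            rw [Finset.mem_insert] at hi
            intro hcon
            rw [Finset.mem_insert] at hcon
            rcases hi with rfl | hi
            · rcases hcon with h | h
              · omega
              · have := hsub h; simp at this; omega
            · rcases hcon with h | h
              · have := hsub hi; simp at this; omega
              · exact hnc i hi h
        · intro T hT
          simp only [Finset.mem_coe, hF, Finset.mem_filter] at hT
          exact Finset.insert_erase hT.2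
        · intro T hT
          simp only [Finset.mem_coe, Finset.mem_filter, Finset.mem_powersetCard] at hT
          have hnotin : m + 1 ∉ T := fun h => by have := hT.1.1 h; simp at this
          exact Finset.erase_insert hnotin
      rw [← hsplit, hnot, hmemcard, IH (m + 1) (by omega) (k + 1), IH m (by omega) k]
      have ha : m + 1 + 1 - (k + 1) = m + 1 - k := by omega
      rw [ha]
      rcases Nat.lt_or_ge (m + 1) k with h | h
      · have h0 : m + 1 - k = 0 := by omega
        have h1 : m + 2 + 1 - (k + 1) = m + 2 - k := by omega
        rw [h0, h1, Nat.choose_eq_zero_of_lt (by omega : 0 < k + 1),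
          Nat.choose_eq_zero_of_lt (by omega : 0 < k),
          Nat.choose_eq_zero_of_lt (by omega : m + 2 - k < k + 1)]
      · have hb : m + 2 + 1 - (k + 1) = (m + 1 - k) + 1 := by omega
        rw [hb, Nat.choose_succ_succ, Nat.add_comm]

lemma card_pbad (n k : ℕ) (hn : 1 ≤ n) :
    (((Finset.univ : Finset (Fin n)).powersetCard k).filter (PBad n)).card
      = (((Finset.range (n - 2)).powersetCard k).filter NoConsec).card := by
  apply Finset.card_nbij' (fun S => S.image (fun i : Fin n => (i : ℕ) - 1))
    (fun T => T.image (fun a => (⟨(a + 1) % n, Nat.mod_lt _ hn⟩ : Fin n)))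
  · -- forward map lands in target
    intro S hS
    simp only [Finset.mem_coe, Finset.mem_filter, Finset.mem_powersetCard_univ] at hS
    obtain ⟨hcard, h0, hl, hc⟩ := hS
    have hinj : Set.InjOn (fun i : Fin n => (i : ℕ) - 1) ↑S := by
      intro i hi j hj hij
      have hi0 := h0 i hi
      have hj0 := h0 j hj
      exact Fin.ext (by simp only at hij; omega)
    simp only [Finset.mem_coe, Finset.mem_filter, Finset.mem_powersetCard]
    refine ⟨⟨fun a ha => ?_, ?_⟩, ?_⟩
    · simp only [Finset.mem_image] at ha
      obtain ⟨i, hi, rfl⟩ := ha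
      have := h0 i hi; have := hl i hi; have := i.isLt
      simp only [Finset.mem_range]; omega
    · rw [Finset.card_image_of_injOn hinj, hcard]
    · intro a ha hcon
      simp only [Finset.mem_image] at ha hcon
      obtain ⟨i, hi, hia⟩ := ha
      obtain ⟨j, hj, hja⟩ := hcon
      have := h0 i hi; have := h0 j hj
      exact hc i hi j hj (by omega)
  · -- backward map lands in source
    intro T hT
    simp only [Finset.mem_coe, Finset.mem_filter, Finset.mem_powersetCard] at hT
    obtain ⟨⟨hsub, hcard⟩, hnc⟩ := hT
    have hval : ∀ a ∈ T, ((a + 1) % n) = a + 1 := by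
      intro a ha
      have := Finset.mem_range.mp (hsub ha)
      exact Nat.mod_eq_of_lt (by omega)
    simp only [Finset.mem_coe, Finset.mem_filter, Finset.mem_powersetCard_univ]
    refine ⟨?_, ?_, ?_, ?_⟩
    · rw [Finset.card_image_of_injOn, hcard]
      intro a ha b hb hab
      have := hval a ha; have := hval b hb
      apply_fun Fin.val at hab
      simp only [Fin.val_mk] at hab
      omega
    · intro i hi
      simp only [Finset.mem_image] at hi
      obtain ⟨a, ha, rfl⟩ := hi
      simp only [Fin.val_mk, hval a ha]; omega
    · intro i hi
      simp only [Finset.mem_image] at hi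
      obtain ⟨a, ha, rfl⟩ := hi
      have := Finset.mem_range.mp (hsub ha)
      simp only [Fin.val_mk, hval a ha]; omega
    · intro i hi j hj
      simp only [Finset.mem_image] at hi hj
      obtain ⟨a, ha, rfl⟩ := hi
      obtain ⟨b, hb, rfl⟩ := hj
      simp only [Fin.val_mk, hval a ha, hval b hb]
      intro hab
      have hb' : b = a + 1 := by omega
      exact hnc a ha (hb' ▸ hb)
  · -- left inverse
    intro S hS
    simp only [Finset.mem_coe, Finset.mem_filter, Finset.mem_powersetCard_univ] at hS
    obtain ⟨hcard, h0, hl, hc⟩ := hS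
    ext i
    simp only [Finset.mem_image]
    constructor
    · rintro ⟨a, ⟨j, hj, rfl⟩, rfl⟩
      have h1 := h0 j hj
      have h2 := j.isLt
      have heq : (⟨((j : ℕ) - 1 + 1) % n, Nat.mod_lt _ hn⟩ : Fin n) = j := by
        apply Fin.ext
        simp only [Fin.val_mk]
        rw [Nat.sub_add_cancel (by omega), Nat.mod_eq_of_lt h2]
      rw [heq]; exact hj
    · intro hi
      refine ⟨(i : ℕ) - 1, ⟨i, hi, rfl⟩, ?_⟩
      have h1 := h0 i hi
      have h2 := i.isLt
      apply Fin.ext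
      simp only [Fin.val_mk]
      rw [Nat.sub_add_cancel (by omega), Nat.mod_eq_of_lt h2]
  · -- right inverse
    intro T hT
    simp only [Finset.mem_coe, Finset.mem_filter, Finset.mem_powersetCard] at hT
    obtain ⟨⟨hsub, hcard⟩, hnc⟩ := hT
    ext a
    simp only [Finset.mem_image]
    constructor
    · rintro ⟨i, ⟨b, hb, rfl⟩, rfl⟩
      have := Finset.mem_range.mp (hsub hb)
      have hm : (b + 1) % n = b + 1 := Nat.mod_eq_of_lt (by omega)
      simpa [hm] using hb
    · intro ha
      have := Finset.mem_range.mp (hsub ha)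
      have hm : (a + 1) % n = a + 1 := Nat.mod_eq_of_lt (by omega)
      exact ⟨⟨(a + 1) % n, Nat.mod_lt _ hn⟩, ⟨a, ha, rfl⟩, by simp [hm]⟩

lemma nfCount_eq_filter (n k : ℕ) (hn : 1 ≤ n) :
    nfCount (pathGraph n) k
      = (((Finset.univ : Finset (Fin n)).powersetCard k).filter (PBad n)).card := by
  classical
  unfold nfCount
  rw [Nat.card_congr (Equiv.subtypeEquivRight (q := fun S : Finset (Fin n) =>
    S.card = k ∧ PBad n S)
    (fun S => and_congr_right fun _ => not_forcing_iff_pbad hn S))]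
  rw [Nat.card_eq_fintype_card, Fintype.card_subtype]
  congr 1
  ext S
  simp only [Finset.mem_filter, Finset.mem_univ, true_and,
    Finset.mem_powersetCard_univ]

lemma zfCount_eq_filter (n k : ℕ) (hn : 1 ≤ n) :
    zfCount (pathGraph n) k
      = (((Finset.univ : Finset (Fin n)).powersetCard k).filter
          (fun S => ¬ PBad n S)).card := by
  classical
  unfold zfCount
  rw [Nat.card_congr (Equiv.subtypeEquivRight (q := fun S : Finset (Fin n) =>
    S.card = k ∧ ¬ PBad n S)
    (fun S => and_congr_right fun _ => by
      rw [← not_forcing_iff_pbad hn S, not_not]))]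
  rw [Nat.card_eq_fintype_card, Fintype.card_subtype]
  congr 1
  ext S
  simp only [Finset.mem_filter, Finset.mem_univ, true_and,
    Finset.mem_powersetCard_univ]

end Aux

/-- For the path `Pₙ` (n ≥ 1) and `0 ≤ k ≤ n`: the number of non-forcing `k`-subsets
is `C(n-k-1, k)`, and the number of zero forcing sets of size `k` is
`C(n,k) - C(n-k-1, k)`. -/
theorem stmt_2 (n k : ℕ) (hn : 1 ≤ n) (hk : k ≤ n) :
    nfCount (SimpleGraph.pathGraph n) k = Nat.choose (n - k - 1) k ∧
    zfCount (SimpleGraph.pathGraph n) k = Nat.choose n k - Nat.choose (n - k - 1) k := by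
  classical
  have hnf : nfCount (SimpleGraph.pathGraph n) k = Nat.choose (n - k - 1) k := by
    rw [nfCount_eq_filter n k hn, card_pbad n k hn, count_noConsec]
    rcases Nat.lt_or_ge n 2 with h2 | h2
    · -- n = 1
      have hn1 : n = 1 := by omega
      subst hn1
      interval_cases k <;> simp
    · congr 1
      omega
  refine ⟨hnf, ?_⟩
  have htot : (((Finset.univ : Finset (Fin n)).powersetCard k).filter (PBad n)).card
      + (((Finset.univ : Finset (Fin n)).powersetCard k).filter
          (fun S => ¬ PBad n S)).card
      = Nat.choose n k := by
    rw [Finset.card_filter_add_card_filter_not, Finset.card_powersetCard]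
    congr 1
    simp
  rw [zfCount_eq_filter n k hn, ← hnf, nfCount_eq_filter n k hn] at *
  omega
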